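/- For every integer n ≥ 1, one has 1/(12n+1) < ln(n!) − n·ln(n) + n − (1/2)·ln(2πn) < 1/(12n). -/

import Mathlib

open Real Set Filter

lemma artanh_lower {t : ℝ} (h0 : 0 < t) (h1 : t < 1) :
    2*t + 2*t^3/3 < Real.log (1+t) - Real.log (1-t) := by
  set F : ℝ → ℝ := fun x => Real.log (1+x) - Real.log (1-x) - (2*x + 2*x^3/3) with hF
  have key : StrictMonoOn F (Icc 0 t) := by
    apply strictMonoOn_of_deriv_pos (convex_Icc 0 t)
    · apply ContinuousOn.sub
      apply ContinuousOn.sub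
      · exact (continuousOn_const.add continuousOn_id).log
          (fun x hx => by have := hx.1; dsimp; linarith)
      · exact (continuousOn_const.sub continuousOn_id).log
          (fun x hx => by have := hx.2; dsimp; nlinarith)
      · fun_prop
    · intro x hx
      rw [interior_Icc] at hx
      have hx0 : (0:ℝ) < 1 + x := by linarith [hx.1]
      have hx1 : (0:ℝ) < 1 - x := by linarith [hx.2]
      have hd : HasDerivAt F (1/(1+x) - (-1)/(1-x) - (2*1 + 2*(3*x^2)/3)) x := by
        apply HasDerivAt.sub
        apply HasDerivAt.sub
        · simpa using (((hasDerivAt_id x).const_add 1).log hx0.ne')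
        · simpa using (((hasDerivAt_id x).const_sub 1).log hx1.ne')
        · exact (((hasDerivAt_id x).const_mul 2).add
            (((hasDerivAt_pow 3 x).const_mul 2).div_const 3))
      rw [hd.deriv]
      have : 1/(1+x) - (-1)/(1-x) - (2*1 + 2*(3*x^2)/3) = 2*x^4/((1+x)*(1-x)) := by
        field_simp; ring
      rw [this]
      have := hx.1
      positivity
  have h := key (left_mem_Icc.2 h0.le) (right_mem_Icc.2 h0.le) h0
  simp only [hF] at h
  simp at h
  linarith

lemma artanh_upper {t : ℝ} (h0 : 0 < t) (h1 : t < 1) :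
    Real.log (1+t) - Real.log (1-t) < 2*t + (2/3)*(t^3/(1-t^2)) := by
  set G : ℝ → ℝ := fun x => 2*x + (2/3)*(x^3/(1-x^2)) - (Real.log (1+x) - Real.log (1-x)) with hG
  have key : StrictMonoOn G (Icc 0 t) := by
    apply strictMonoOn_of_deriv_pos (convex_Icc 0 t)
    · apply ContinuousOn.sub
      · apply ContinuousOn.add
        · fun_prop
        · apply ContinuousOn.mul continuousOn_const
          apply ContinuousOn.div (by fun_prop) (by fun_prop)
          intro x hx
          have := hx.1; have := hx.2; dsimp; nlinarith
      · apply ContinuousOn.sub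
        · exact (continuousOn_const.add continuousOn_id).log
            (fun x hx => by have := hx.1; dsimp; linarith)
        · exact (continuousOn_const.sub continuousOn_id).log
            (fun x hx => by have := hx.2; dsimp; nlinarith)
    · intro x hx
      rw [interior_Icc] at hx
      have hx0 : (0:ℝ) < 1 + x := by linarith [hx.1]
      have hx1 : (0:ℝ) < 1 - x := by linarith [hx.2]
      have hden : (0:ℝ) < 1 - x^2 := by nlinarith [hx.1, hx.2]
      have hd : HasDerivAt G
          (2*1 + (2/3)*((3*x^2*(1-x^2) - x^3*(0 - 2*x^1))/(1-x^2)^2)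
            - (1/(1+x) - (-1)/(1-x))) x := by
        apply HasDerivAt.sub
        · apply HasDerivAt.add
          · exact (hasDerivAt_id x).const_mul 2
          · exact ((hasDerivAt_pow 3 x).div ((hasDerivAt_pow 2 x).const_sub 1) hden.ne').const_mul (2/3) |>.congr_deriv (by ring_nf)
        · apply HasDerivAt.sub
          · simpa using (((hasDerivAt_id x).const_add 1).log hx0.ne')
          · simpa using (((hasDerivAt_id x).const_sub 1).log hx1.ne')
      rw [hd.deriv]
      have : 2*1 + (2/3)*((3*x^2*(1-x^2) - x^3*(0 - 2*x^1))/(1-x^2)^2)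
            - (1/(1+x) - (-1)/(1-x)) = (4/3)*x^4/(1-x^2)^2 := by
        have h2 : (1-x^2) = (1+x)*(1-x) := by ring
        field_simp
        ring
      rw [this]
      have := hx.1
      positivity
  have h := key (left_mem_Icc.2 h0.le) (right_mem_Icc.2 h0.le) h0
  simp only [hG] at h
  simp at h
  linarith

noncomputable def dd (n : ℕ) : ℝ :=
  Real.log (Nat.factorial n : ℝ) - n * Real.log n + n - (1 / 2) * Real.log (2 * Real.pi * n)

lemma dd_diff (n : ℕ) (hn : 1 ≤ n) :
    dd n - dd (n+1) = ((n:ℝ) + 1/2) * (Real.log ((n:ℝ)+1) - Real.log n) - 1 := by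
  have hn0 : (0:ℝ) < n := by exact_mod_cast hn
  have hfac : (0:ℝ) < (Nat.factorial n : ℝ) := by exact_mod_cast Nat.factorial_pos n
  have h1 : Real.log ((Nat.factorial (n+1) : ℕ) : ℝ)
      = Real.log ((n:ℝ)+1) + Real.log (Nat.factorial n : ℝ) := by
    rw [Nat.factorial_succ]
    push_cast
    rw [Real.log_mul (by linarith) hfac.ne']
  have h2 : Real.log (2 * Real.pi * ((n:ℝ)+1))
      = Real.log (2 * Real.pi) + Real.log ((n:ℝ)+1) := by
    rw [Real.log_mul (by positivity) (by linarith)]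
  have h3 : Real.log (2 * Real.pi * (n:ℝ))
      = Real.log (2 * Real.pi) + Real.log (n:ℝ) := by
    rw [Real.log_mul (by positivity) hn0.ne']
  simp only [dd]
  push_cast
  rw [h1, h2, h3]
  ring

lemma dd_tendsto : Tendsto dd atTop (nhds 0) := by
  have hpi : (0:ℝ) < Real.sqrt Real.pi := Real.sqrt_pos.2 Real.pi_pos
  have h1 : Tendsto (fun n => Real.log (Stirling.stirlingSeq n)) atTop
      (nhds (Real.log (Real.sqrt Real.pi))) :=
    ((Real.continuousAt_log hpi.ne').tendsto).comp Stirling.tendsto_stirlingSeq_sqrt_pi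
  have h2 : Tendsto (fun n => Real.log (Stirling.stirlingSeq n) - Real.log (Real.sqrt Real.pi))
      atTop (nhds 0) := by simpa using h1.sub (tendsto_const_nhds (x := Real.log (Real.sqrt Real.pi)))
  apply h2.congr'
  filter_upwards [eventually_ge_atTop 1] with n hn
  have hn0 : (0:ℝ) < n := by exact_mod_cast hn
  rw [Stirling.log_stirlingSeq_formula]
  have hlogdiv : Real.log ((n:ℝ) / Real.exp 1) = Real.log n - 1 := by
    rw [Real.log_div hn0.ne' (Real.exp_pos 1).ne', Real.log_exp]
  have h2n : Real.log (2 * Real.pi * (n:ℝ)) = Real.log (2*(n:ℝ)) + Real.log Real.pi := by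
    rw [← Real.log_mul (by positivity) Real.pi_pos.ne']
    ring_nf
  rw [Real.log_sqrt Real.pi_pos.le, hlogdiv]
  simp only [dd]
  rw [h2n]
  ring




lemma log_succ_sub (n : ℕ) (hn : 1 ≤ n) :
    Real.log ((n:ℝ)+1) - Real.log n
      = Real.log (1 + 1/(2*(n:ℝ)+1)) - Real.log (1 - 1/(2*(n:ℝ)+1)) := by
  have hn0 : (0:ℝ) < n := by exact_mod_cast hn
  have hd : (0:ℝ) < 2*(n:ℝ)+1 := by linarith
  have e1 : 1 + 1/(2*(n:ℝ)+1) = ((n:ℝ)+1) * (2/(2*(n:ℝ)+1)) := by field_simp; ring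
  have e2 : 1 - 1/(2*(n:ℝ)+1) = (n:ℝ) * (2/(2*(n:ℝ)+1)) := by field_simp; ring
  rw [e1, e2, Real.log_mul (by linarith) (by positivity),
    Real.log_mul hn0.ne' (by positivity)]
  ring

lemma step_upper (n : ℕ) (hn : 1 ≤ n) :
    dd n - dd (n+1) < 1/(12*(n:ℝ)) - 1/(12*(n:ℝ)+12) := by
  have hn0 : (0:ℝ) < n := by exact_mod_cast hn
  set t : ℝ := 1/(2*(n:ℝ)+1) with ht
  have ht0 : 0 < t := by positivity
  have ht1 : t < 1 := by rw [ht]; rw [div_lt_one (by linarith)]; linarith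
  have h := artanh_upper ht0 ht1
  have hposR : (0:ℝ) < (n:ℝ) + 1/2 := by linarith
  rw [dd_diff n hn, log_succ_sub n hn]
  have key : ((n:ℝ) + 1/2) * (2*t + (2/3)*(t^3/(1-t^2))) - 1
      = 1/(12*(n:ℝ)) - 1/(12*(n:ℝ)+12) := by
    rw [ht]
    have h2 : (1:ℝ) - (1/(2*(n:ℝ)+1))^2 = (4*(n:ℝ)^2+4*(n:ℝ))/((2*(n:ℝ)+1)^2) := by
      field_simp; ring
    rw [h2]
    have h3 : (4*(n:ℝ)^2+4*(n:ℝ)) ≠ 0 := by positivity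
    field_simp
    ring
  calc ((n:ℝ) + 1/2) * (Real.log (1+t) - Real.log (1-t)) - 1
      < ((n:ℝ) + 1/2) * (2*t + (2/3)*(t^3/(1-t^2))) - 1 := by
        have := mul_lt_mul_of_pos_left h hposR; linarith
    _ = 1/(12*(n:ℝ)) - 1/(12*(n:ℝ)+12) := key

lemma step_lower (n : ℕ) (hn : 1 ≤ n) :
    1/(12*(n:ℝ)+1) - 1/(12*(n:ℝ)+13) < dd n - dd (n+1) := by
  have hn0 : (0:ℝ) < n := by exact_mod_cast hn
  have hn1 : (1:ℝ) ≤ n := by exact_mod_cast hn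
  set t : ℝ := 1/(2*(n:ℝ)+1) with ht
  have ht0 : 0 < t := by positivity
  have ht1 : t < 1 := by rw [ht]; rw [div_lt_one (by linarith)]; linarith
  have h := artanh_lower ht0 ht1
  have hposR : (0:ℝ) < (n:ℝ) + 1/2 := by linarith
  rw [dd_diff n hn, log_succ_sub n hn]
  have key : ((n:ℝ) + 1/2) * (2*t + 2*t^3/3) - 1 = 1/(3*(2*(n:ℝ)+1)^2) := by
    rw [ht]; field_simp; ring
  have hstep : 1/(12*(n:ℝ)+1) - 1/(12*(n:ℝ)+13) < 1/(3*(2*(n:ℝ)+1)^2) := by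
    have e : 1/(12*(n:ℝ)+1) - 1/(12*(n:ℝ)+13) = 12/((12*(n:ℝ)+1)*(12*(n:ℝ)+13)) := by
      field_simp; ring
    rw [e, div_lt_div_iff₀ (by positivity) (by positivity)]
    nlinarith
  calc 1/(12*(n:ℝ)+1) - 1/(12*(n:ℝ)+13) < 1/(3*(2*(n:ℝ)+1)^2) := hstep
    _ = ((n:ℝ) + 1/2) * (2*t + 2*t^3/3) - 1 := key.symm
    _ < ((n:ℝ) + 1/2) * (Real.log (1+t) - Real.log (1-t)) - 1 := by
        have := mul_lt_mul_of_pos_left h hposR; linarith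

theorem robbins_stirling (n : ℕ) (hn : 1 ≤ n) :
    1 / (12 * (n : ℝ) + 1)
      < Real.log (Nat.factorial n : ℝ) - n * Real.log n + n - (1 / 2) * Real.log (2 * Real.pi * n)
    ∧ Real.log (Nat.factorial n : ℝ) - n * Real.log n + n - (1 / 2) * Real.log (2 * Real.pi * n)
      < 1 / (12 * (n : ℝ)) := by
  set u : ℕ → ℝ := fun k => dd k - 1/(12*(k:ℝ)) with hu
  set v : ℕ → ℝ := fun k => dd k - 1/(12*(k:ℝ)+1) with hv
  have hustep : ∀ k, 1 ≤ k → u k < u (k+1) := by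
    intro k hk
    have := step_upper k hk
    have e : 1/(12*((k:ℝ)+1)) = 1/(12*(k:ℝ)+12) := by ring_nf
    simp only [hu]
    push_cast
    rw [e]
    linarith
  have hvstep : ∀ k, 1 ≤ k → v (k+1) < v k := by
    intro k hk
    have := step_lower k hk
    have e : 1/(12*((k:ℝ)+1)+1) = 1/(12*(k:ℝ)+13) := by ring_nf
    simp only [hv]
    push_cast
    rw [e]
    linarith
  have hinv : Tendsto (fun k : ℕ => 1/(12*(k:ℝ))) atTop (nhds 0) := by
    have := tendsto_one_div_atTop_nhds_zero_nat.const_mul (1/12 : ℝ)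
    simp only [mul_zero] at this
    apply this.congr
    intro k
    rw [one_div_mul_one_div]
  have hinv1 : Tendsto (fun k : ℕ => 1/(12*(k:ℝ)+1)) atTop (nhds 0) := by
    have h12 : Tendsto (fun k : ℕ => 12*(k:ℝ)+1) atTop atTop := by
      apply Filter.Tendsto.atTop_add _ tendsto_const_nhds
      exact Tendsto.const_mul_atTop (by norm_num) tendsto_natCast_atTop_atTop
    simpa [one_div, Pi.inv_def] using h12.inv_tendsto_atTop
  have hut : Tendsto u atTop (nhds 0) := by
    have h := dd_tendsto.sub hinv
    rw [sub_zero] at h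
    exact h
  have hvt : Tendsto v atTop (nhds 0) := by
    have h := dd_tendsto.sub hinv1
    rw [sub_zero] at h
    exact h
  -- monotonicity from a point
  have humono : ∀ k m, 1 ≤ k → k ≤ m → u k ≤ u m := by
    intro k m hk hkm
    induction hkm with
    | refl => exact le_rfl
    | @step m h ih => exact ih.trans (hustep m (hk.trans h)).le
  have hvmono : ∀ k m, 1 ≤ k → k ≤ m → v m ≤ v k := by
    intro k m hk hkm
    induction hkm with
    | refl => exact le_rfl
    | @step m h ih => exact (hvstep m (hk.trans h)).le.trans ih
  have hu0 : u (n+1) ≤ 0 := by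
    apply ge_of_tendsto hut
    filter_upwards [eventually_ge_atTop (n+1)] with m hm
    exact humono (n+1) m (by omega) hm
  have hv0 : 0 ≤ v (n+1) := by
    apply le_of_tendsto hvt
    filter_upwards [eventually_ge_atTop (n+1)] with m hm
    exact hvmono (n+1) m (by omega) hm
  have h1 := hustep n hn
  have h2 := hvstep n hn
  constructor
  · have : 0 < v n := lt_of_le_of_lt hv0 h2
    simp only [hv, dd] at this
    linarith
  · have : u n < 0 := lt_of_lt_of_le h1 hu0
    simp only [hu, dd] at this
    linarith
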